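/- arXiv:1903.02890 — 3 statements merged into one kernel-verified Lean document; each statement's English description precedes it below -/
import Mathlib

section
/- Let (K, w) be a weighted simplicial complex over an integral domain R with 1, with all weights nonzero. Then the weighted boundary maps satisfy ∂_{n-1} ∘ ∂_n = 0 on the chain groups C_n(K; R). -/
lemma wbsz_sval {n : ℕ} (p : Fin (n+1)) (i : Fin n) :
    (p.succAbove i : ℕ) = if (i:ℕ) < p then (i:ℕ) else (i:ℕ)+1 := by
  rw [Fin.succAbove]
  split_ifs with h1 h2 h2 <;> simp_all [Fin.lt_def]

lemma wbsz_face_subset {V : Type*} [DecidableEq V] {n : ℕ} (σ : Fin (n+1+1) ↪ V)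
    (i : Fin (n+1+1)) :
    Finset.univ.image ((Fin.succAboveEmb i).trans σ) ⊆ Finset.univ.image σ := by
  intro x hx
  simp only [Finset.mem_image, Finset.mem_univ, true_and, Function.Embedding.trans_apply] at hx ⊢
  obtain ⟨k, rfl⟩ := hx
  exact ⟨_, rfl⟩

lemma wbsz_face_inj {V : Type*} {n : ℕ} (σ : Fin (n+1+1) ↪ V) {i j : Fin (n+1+1)}
    (h : (Fin.succAboveEmb i).trans σ = (Fin.succAboveEmb j).trans σ) : i = j := by
  apply Fin.succAbove_left_injective (n := n+1)
  funext k
  have : σ (i.succAbove k) = σ (j.succAbove k) := DFunLike.congr_fun h k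
  exact σ.injective this

set_option maxHeartbeats 2000000 in
/-- For a weighted simplicial complex `(K, w)` over an integral domain `R` with
all weights nonzero (weights dividing along faces, with quotient function `q`, i.e.
`w σ = q σ τ * w τ` for `τ ⊆ σ`), the weighted boundary maps
`∂ σ = Σ_i (w σ / w (dᵢ σ)) (−1)ⁱ dᵢ σ` on the chain modules (free `R`-modules on the
ordered simplices of `K`, encoded as injective tuples whose vertex set lies in `K`)
satisfy `∂ ∘ ∂ = 0`. -/
theorem weighted_boundary_squared_eq_zero
    {V R : Type*} [DecidableEq V] [CommRing R] [IsDomain R]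
    (K : Set (Finset V))
    (hKne : ∀ σ ∈ K, σ.Nonempty)
    (hKclosed : ∀ σ ∈ K, ∀ τ : Finset V, τ ⊆ σ → τ.Nonempty → τ ∈ K)
    (w : Finset V → R)
    (hw0 : ∀ σ ∈ K, w σ ≠ 0)
    (q : Finset V → Finset V → R)
    (hq : ∀ σ ∈ K, ∀ τ ∈ K, τ ⊆ σ → w σ = q σ τ * w τ)
    (bd : ∀ m : ℕ,
      ({σ : Fin (m + 2) ↪ V // Finset.univ.image σ ∈ K} →₀ R) →ₗ[R]
        ({τ : Fin (m + 1) ↪ V // Finset.univ.image τ ∈ K} →₀ R))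
    (hbd : ∀ (m : ℕ) (σ : {σ : Fin (m + 2) ↪ V // Finset.univ.image σ ∈ K})
        (τ : {τ : Fin (m + 1) ↪ V // Finset.univ.image τ ∈ K}) (i : Fin (m + 2)),
        (τ : Fin (m + 1) ↪ V) = (Fin.succAboveEmb i).trans σ.1 →
        (bd m (Finsupp.single σ 1)) τ =
          (-1 : R) ^ (i : ℕ) * q (Finset.univ.image σ.1) (Finset.univ.image τ.1))
    (hbd0 : ∀ (m : ℕ) (σ : {σ : Fin (m + 2) ↪ V // Finset.univ.image σ ∈ K})
        (τ : {τ : Fin (m + 1) ↪ V // Finset.univ.image τ ∈ K}),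
        (∀ i : Fin (m + 2), (τ : Fin (m + 1) ↪ V) ≠ (Fin.succAboveEmb i).trans σ.1) →
        (bd m (Finsupp.single σ 1)) τ = 0) :
    ∀ m : ℕ, (bd m).comp (bd (m + 1)) = 0 := by
  classical
  -- faces stay in K
  have hface : ∀ (n : ℕ) (σ : Fin (n+2) ↪ V), Finset.univ.image σ ∈ K →
      ∀ i : Fin (n+2), Finset.univ.image ((Fin.succAboveEmb i).trans σ) ∈ K := by
    intro n σ hσ i
    exact hKclosed _ hσ _ (wbsz_face_subset σ i) (Finset.univ_nonempty.image _)
  -- expansion of the boundary of a basis element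
  have keyA : ∀ (n : ℕ) (σ : {σ : Fin (n + 2) ↪ V // Finset.univ.image σ ∈ K}),
      bd n (Finsupp.single σ 1) = ∑ i : Fin (n+2),
        ((-1:R)^(i:ℕ) * q (Finset.univ.image σ.1)
            (Finset.univ.image ((Fin.succAboveEmb i).trans σ.1))) •
          Finsupp.single (⟨(Fin.succAboveEmb i).trans σ.1, hface n σ.1 σ.2 i⟩ :
            {τ : Fin (n + 1) ↪ V // Finset.univ.image τ ∈ K}) 1 := by
    intro n σ
    ext τ
    rw [Finsupp.finset_sum_apply]
    simp only [Finsupp.smul_apply, Finsupp.single_apply, smul_eq_mul, mul_ite, mul_one, mul_zero]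
    by_cases h : ∃ i : Fin (n+2), (τ : Fin (n+1) ↪ V) = (Fin.succAboveEmb i).trans σ.1
    · obtain ⟨i0, hi0⟩ := h
      rw [hbd n σ τ i0 hi0, Finset.sum_eq_single i0]
      · rw [if_pos (Subtype.ext hi0.symm), hi0]
      · intro b _ hb
        rw [if_neg]
        intro hc
        exact hb (wbsz_face_inj σ.1 ((congrArg Subtype.val hc).trans hi0))
      · intro hni; exact absurd (Finset.mem_univ i0) hni
    · push_neg at h
      rw [hbd0 n σ τ h]
      symm
      apply Finset.sum_eq_zero
      intro i _
      rw [if_neg]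
      intro hc
      exact h i (congrArg Subtype.val hc).symm
  intro m
  -- it suffices to treat basis elements
  have key : ∀ σ : {σ : Fin (m + 3) ↪ V // Finset.univ.image σ ∈ K},
      (bd m) ((bd (m+1)) (Finsupp.single σ 1)) = 0 := by
    intro σ
    rw [keyA (m+1) σ, map_sum]
    simp only [map_smul, keyA m]
    simp only [Finset.smul_sum, smul_smul]
    rw [← Finset.sum_product']
    refine Finset.sum_ninvolution
      (fun p : Fin (m+3) × Fin (m+2) =>
        if h : (p.1 : ℕ) ≤ (p.2 : ℕ) then (p.2.succ, (⟨(p.1 : ℕ), by omega⟩ : Fin (m+2)))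
        else (p.2.castSucc, (⟨(p.1 : ℕ) - 1, by omega⟩ : Fin (m+2))))
      ?_ (fun p _ => ?_) (fun p => Finset.mem_univ _) ?_
    · -- pairs cancel
      rintro ⟨i, j⟩
      by_cases h : (i : ℕ) ≤ (j : ℕ)
      · simp only [dif_pos h]
        set i' : Fin (m+3) := j.succ with hi'
        set j' : Fin (m+2) := ⟨(i:ℕ), by omega⟩ with hj'
        have hemb : (Fin.succAboveEmb j).trans ((Fin.succAboveEmb i).trans σ.1) =
            (Fin.succAboveEmb j').trans ((Fin.succAboveEmb i').trans σ.1) := by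
          ext k
          simp only [Function.Embedding.trans_apply, Fin.coe_succAboveEmb]
          congr 1
          apply Fin.val_injective
          rw [wbsz_sval, wbsz_sval, wbsz_sval, wbsz_sval]
          simp only [hi', hj', Fin.val_succ]
          split_ifs <;> omega
        set A := Finset.univ.image σ.1 with hA
        set B₁ := Finset.univ.image ((Fin.succAboveEmb i).trans σ.1) with hB1
        set B₂ := Finset.univ.image ((Fin.succAboveEmb i').trans σ.1) with hB2
        set C := Finset.univ.image
            ((Fin.succAboveEmb j).trans ((Fin.succAboveEmb i).trans σ.1)) with hC
        have hC' : Finset.univ.image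
            ((Fin.succAboveEmb j').trans ((Fin.succAboveEmb i').trans σ.1)) = C := by
          rw [hC, hemb]
        have hAK : A ∈ K := σ.2
        have hB1K : B₁ ∈ K := hface _ _ σ.2 i
        have hB2K : B₂ ∈ K := hface _ _ σ.2 i'
        have hCK : C ∈ K := hface _ _ hB1K j
        have hqeq : q A B₁ * q B₁ C = q A B₂ * q B₂ C := by
          have e1a := hq A hAK B₁ hB1K (wbsz_face_subset _ i)
          have e1b := hq B₁ hB1K C hCK (wbsz_face_subset _ j)
          have e2a := hq A hAK B₂ hB2K (wbsz_face_subset _ i')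
          have e2b := hq B₂ hB2K C hCK (by rw [← hC']; exact wbsz_face_subset _ _)
          have e1 : w A = q A B₁ * q B₁ C * w C := by rw [e1a, e1b, mul_assoc]
          have e2 : w A = q A B₂ * q B₂ C * w C := by rw [e2a, e2b, mul_assoc]
          exact mul_right_cancel₀ (hw0 C hCK) (e1.symm.trans e2)
        have hsingle : (⟨(Fin.succAboveEmb j).trans ((Fin.succAboveEmb i).trans σ.1),
              hface m _ (hface (m+1) σ.1 σ.2 i) j⟩ :
              {τ : Fin (m + 1) ↪ V // Finset.univ.image τ ∈ K}) =
            ⟨(Fin.succAboveEmb j').trans ((Fin.succAboveEmb i').trans σ.1),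
              hface m _ (hface (m+1) σ.1 σ.2 i') j'⟩ := Subtype.ext hemb
        rw [hsingle, hC', ← add_smul]
        convert zero_smul R _
        have hvi' : (i' : ℕ) = (j : ℕ) + 1 := rfl
        have hvj' : (j' : ℕ) = (i : ℕ) := rfl
        rw [hvi', hvj', pow_succ]
        linear_combination ((-1:R)^(i:ℕ) * (-1:R)^(j:ℕ)) * hqeq
      · simp only [dif_neg h]
        set i' : Fin (m+3) := j.castSucc with hi'
        set j' : Fin (m+2) := ⟨(i:ℕ) - 1, by omega⟩ with hj'
        have hemb : (Fin.succAboveEmb j).trans ((Fin.succAboveEmb i).trans σ.1) =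
            (Fin.succAboveEmb j').trans ((Fin.succAboveEmb i').trans σ.1) := by
          ext k
          simp only [Function.Embedding.trans_apply, Fin.coe_succAboveEmb]
          congr 1
          apply Fin.val_injective
          rw [wbsz_sval, wbsz_sval, wbsz_sval, wbsz_sval]
          simp only [hi', hj', Fin.coe_castSucc]
          split_ifs <;> omega
        set A := Finset.univ.image σ.1 with hA
        set B₁ := Finset.univ.image ((Fin.succAboveEmb i).trans σ.1) with hB1
        set B₂ := Finset.univ.image ((Fin.succAboveEmb i').trans σ.1) with hB2
        set C := Finset.univ.image
            ((Fin.succAboveEmb j).trans ((Fin.succAboveEmb i).trans σ.1)) with hC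
        have hC' : Finset.univ.image
            ((Fin.succAboveEmb j').trans ((Fin.succAboveEmb i').trans σ.1)) = C := by
          rw [hC, hemb]
        have hAK : A ∈ K := σ.2
        have hB1K : B₁ ∈ K := hface _ _ σ.2 i
        have hB2K : B₂ ∈ K := hface _ _ σ.2 i'
        have hCK : C ∈ K := hface _ _ hB1K j
        have hqeq : q A B₁ * q B₁ C = q A B₂ * q B₂ C := by
          have e1a := hq A hAK B₁ hB1K (wbsz_face_subset _ i)
          have e1b := hq B₁ hB1K C hCK (wbsz_face_subset _ j)
          have e2a := hq A hAK B₂ hB2K (wbsz_face_subset _ i')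
          have e2b := hq B₂ hB2K C hCK (by rw [← hC']; exact wbsz_face_subset _ _)
          have e1 : w A = q A B₁ * q B₁ C * w C := by rw [e1a, e1b, mul_assoc]
          have e2 : w A = q A B₂ * q B₂ C * w C := by rw [e2a, e2b, mul_assoc]
          exact mul_right_cancel₀ (hw0 C hCK) (e1.symm.trans e2)
        have hsingle : (⟨(Fin.succAboveEmb j).trans ((Fin.succAboveEmb i).trans σ.1),
              hface m _ (hface (m+1) σ.1 σ.2 i) j⟩ :
              {τ : Fin (m + 1) ↪ V // Finset.univ.image τ ∈ K}) =
            ⟨(Fin.succAboveEmb j').trans ((Fin.succAboveEmb i').trans σ.1),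
              hface m _ (hface (m+1) σ.1 σ.2 i') j'⟩ := Subtype.ext hemb
        rw [hsingle, hC', ← add_smul]
        convert zero_smul R _
        obtain ⟨a, ha⟩ : ∃ a, (i : ℕ) = a + 1 := ⟨(i:ℕ) - 1, by omega⟩
        rw [ha]
        simp only [Nat.add_sub_cancel, pow_succ, Fin.coe_castSucc, hi']
        linear_combination (-(-1:R)^a * (-1:R)^(j:ℕ)) * hqeq
    · -- no fixed points
      intro hfix
      by_cases h : (p.1 : ℕ) ≤ (p.2 : ℕ)
      · rw [dif_pos h] at hfix
        have := congrArg (fun x => (x.1 : ℕ)) hfix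
        simp only [Fin.val_succ] at this
        omega
      · rw [dif_neg h] at hfix
        have := congrArg (fun x => (x.1 : ℕ)) hfix
        simp only [Fin.coe_castSucc] at this
        omega
    · -- involutive
      rintro ⟨i, j⟩
      dsimp only
      by_cases h : (i : ℕ) ≤ (j : ℕ)
      · rw [dif_pos h]
        have h2 : ¬ (((j.succ : Fin (m+3)) : ℕ) ≤
            (((⟨(i:ℕ), by omega⟩ : Fin (m+2))) : ℕ)) := by
          simp only [Fin.val_succ]; omega
        rw [dif_neg h2]
        refine Prod.ext ?_ ?_ <;> apply Fin.val_injective <;>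
          simp only [Fin.val_succ, Fin.coe_castSucc] <;> omega
      · rw [dif_neg h]
        have h2 : (((j.castSucc : Fin (m+3)) : ℕ) ≤
            (((⟨(i:ℕ) - 1, by omega⟩ : Fin (m+2))) : ℕ)) := by
          simp only [Fin.coe_castSucc]; omega
        rw [dif_pos h2]
        refine Prod.ext ?_ ?_ <;> apply Fin.val_injective <;>
          simp only [Fin.val_succ, Fin.coe_castSucc] <;> omega
  apply Finsupp.lhom_ext
  intro σ r
  have hr : (Finsupp.single σ r : {σ : Fin (m + 3) ↪ V // Finset.univ.image σ ∈ K} →₀ R)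
      = r • Finsupp.single σ 1 := by
    rw [Finsupp.smul_single, smul_eq_mul, mul_one]
  rw [LinearMap.comp_apply, LinearMap.zero_apply, hr, map_smul, map_smul, key, smul_zero]
end

section
/- For a finite point set X ⊂ ℝⁿ and a nonnegative integer k ≤ |X|, the k-distance function d_{X,k}, defined by d_{X,k}²(x) = (1/k) Σ_{x_i ∈ NN_X^k(x)} d²(x, x_i), satisfies d_{X,k}²(x) = min over subsets S ⊆ X with |S| = k of ( d²(x, x̄_S) − w_{x̄_S} ), where x̄_S is the barycenter of S and w_{x̄_S} = −(1/k) Σ_{x_i ∈ S} d²(x̄_S, x_i). -/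
open Finset

/-- The barycenter of the `k`-point subset `S` of the point cloud `x`. -/
noncomputable def kBary {n N : ℕ} (x : Fin N → EuclideanSpace ℝ (Fin n)) (k : ℕ)
    (S : Finset (Fin N)) : EuclideanSpace ℝ (Fin n) :=
  (k : ℝ)⁻¹ • ∑ i ∈ S, x i

/-- The weight `w_{x̄_S} = -(1/k) Σ_{x_i ∈ S} d²(x̄_S, x_i)` of the barycenter of `S`. -/
noncomputable def kWeight {n N : ℕ} (x : Fin N → EuclideanSpace ℝ (Fin n)) (k : ℕ)
    (S : Finset (Fin N)) : ℝ :=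
  -((k : ℝ)⁻¹ * ∑ i ∈ S, dist (kBary x k S) (x i) ^ 2)


lemma variance_key {n N : ℕ} (x : Fin N → EuclideanSpace ℝ (Fin n)) {k : ℕ} (hk : 0 < k)
    (p : EuclideanSpace ℝ (Fin n)) (S : Finset (Fin N)) (hS : S.card = k) :
    (k : ℝ)⁻¹ * ∑ i ∈ S, dist p (x i) ^ 2
      = dist p (kBary x k S) ^ 2 + (k : ℝ)⁻¹ * ∑ i ∈ S, dist (kBary x k S) (x i) ^ 2 := by
  set b := kBary x k S with hb
  have hk' : (k : ℝ) ≠ 0 := Nat.cast_ne_zero.2 hk.ne'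
  have hsum : ∑ i ∈ S, (b - x i) = 0 := by
    rw [Finset.sum_sub_distrib, Finset.sum_const, hS, hb, kBary,
      ← Nat.cast_smul_eq_nsmul ℝ, smul_inv_smul₀ hk', sub_self]
  have hexp : ∀ i ∈ S, dist p (x i) ^ 2
      = dist p b ^ 2 + 2 * inner ℝ (p - b) (b - x i) + dist b (x i) ^ 2 := by
    intro i _
    rw [dist_eq_norm, dist_eq_norm, dist_eq_norm]
    have : p - x i = (p - b) + (b - x i) := by abel
    rw [this, norm_add_sq_real]
  rw [Finset.sum_congr rfl hexp]
  simp only [Finset.sum_add_distrib, Finset.sum_const, hS, ← Finset.mul_sum,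
    ← inner_sum, hsum, inner_zero_right, mul_zero, add_zero]
  field_simp
  ring

/-- the squared `k`-distance
`d²_{X,k}(p) = min over k-subsets S of (1/k) Σ_{x_i ∈ S} d²(p, x_i)` (the minimum being
attained at the `k` nearest neighbors) equals the power distance
`min over k-subsets S of (d²(p, x̄_S) − w_{x̄_S})`. -/
theorem kDistance_sq_eq_powerDistance
    {n N k : ℕ} (x : Fin N → EuclideanSpace ℝ (Fin n)) (hk : 0 < k) (hkN : k ≤ N)
    (p : EuclideanSpace ℝ (Fin n)) :
    (Finset.univ.powersetCard k).inf'
        (Finset.powersetCard_nonempty.2 (by simpa using hkN))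
        (fun S => (k : ℝ)⁻¹ * ∑ i ∈ S, dist p (x i) ^ 2)
      = (Finset.univ.powersetCard k).inf'
        (Finset.powersetCard_nonempty.2 (by simpa using hkN))
        (fun S => dist p (kBary x k S) ^ 2 - kWeight x k S) := by
  apply Finset.inf'_congr _ rfl
  intro S hS
  have hcard : S.card = k := (Finset.mem_powersetCard.1 hS).2
  rw [kWeight, variance_key x hk p S hcard, sub_neg_eq_add]
end

section
/- For a finite point set X ⊂ ℝⁿ and integer k ≥ 1, the sublevel set d_{X,k}⁻¹([0, t]) of the k-distance function is a finite union of closed balls: d_{X,k}⁻¹([0, t]) = ⋃_{S ⊆ X, |S| = k} B̄(x̄_S, (t² + w_{x̄_S})^{1/2}), where the ball is empty when t² + w_{x̄_S} < 0. -/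
open Finset

/-- The `k`-distance to the point cloud `x`:
`d_{X,k}(p) = ((min over k-subsets S) (1/k) Σ_{x_i ∈ S} d²(p, x_i))^{1/2}`. -/
noncomputable def kDistance {n N : ℕ} (x : Fin N → EuclideanSpace ℝ (Fin n)) {k : ℕ}
    (hkN : k ≤ N) (p : EuclideanSpace ℝ (Fin n)) : ℝ :=
  Real.sqrt ((Finset.univ.powersetCard k).inf'
    (Finset.powersetCard_nonempty.2 (by simpa using hkN))
    (fun S => (k : ℝ)⁻¹ * ∑ i ∈ S, dist p (x i) ^ 2))

/-- Variance decomposition: the mean squared distance from `p` to the points of `S`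
equals `d²(p, x̄_S)` plus the mean squared distance from the barycenter. -/
lemma kDistance_key_lemma {n N : ℕ} (x : Fin N → EuclideanSpace ℝ (Fin n)) {k : ℕ} (hk : 1 ≤ k)
    (S : Finset (Fin N)) (hS : S.card = k) (p : EuclideanSpace ℝ (Fin n)) :
    (k : ℝ)⁻¹ * ∑ i ∈ S, dist p (x i) ^ 2
      = dist p (kBary x k S) ^ 2 + (k : ℝ)⁻¹ * ∑ i ∈ S, dist (kBary x k S) (x i) ^ 2 := by
  have hk0 : (k : ℝ) ≠ 0 := Nat.cast_ne_zero.2 (by omega)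
  set b := kBary x k S with hb
  have hsum : ∑ i ∈ S, (b - x i) = 0 := by
    rw [Finset.sum_sub_distrib, Finset.sum_const, hS, hb, kBary,
      ← Nat.cast_smul_eq_nsmul ℝ, smul_smul, mul_inv_cancel₀ hk0, one_smul, sub_self]
  have step : ∀ i ∈ S, dist p (x i) ^ 2
      = dist p b ^ 2 + 2 * (inner ℝ (p - b) (b - x i) : ℝ) + dist b (x i) ^ 2 := by
    intro i _
    rw [dist_eq_norm, dist_eq_norm, dist_eq_norm]
    have : p - x i = (p - b) + (b - x i) := by abel
    rw [this, @norm_add_sq_real]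
  rw [Finset.sum_congr rfl step]
  rw [Finset.sum_add_distrib, Finset.sum_add_distrib, Finset.sum_const, hS,
    ← Finset.mul_sum, ← inner_sum, hsum, inner_zero_right, mul_zero, add_zero,
    nsmul_eq_mul, mul_add, ← mul_assoc, inv_mul_cancel₀ hk0, one_mul]

/-- the sublevel set `d_{X,k}⁻¹([0,t])` of the `k`-distance is the finite union,
over `k`-subsets `S` of the point cloud, of the closed balls centered at the barycenters
`x̄_S` of radius `(t² + w_{x̄_S})^{1/2}`, this ball being empty when `t² + w_{x̄_S} < 0`. -/
theorem kDistance_sublevel_eq_union_closedBalls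
    {n N k : ℕ} (x : Fin N → EuclideanSpace ℝ (Fin n)) (hk : 1 ≤ k) (hkN : k ≤ N)
    (t : ℝ) (ht : 0 ≤ t) :
    kDistance x hkN ⁻¹' Set.Icc 0 t
      = ⋃ S ∈ Finset.univ.powersetCard k,
          if 0 ≤ t ^ 2 + kWeight x k S then
            Metric.closedBall (kBary x k S) (Real.sqrt (t ^ 2 + kWeight x k S))
          else ∅ := by
  ext p
  simp only [Set.mem_preimage, Set.mem_Icc, Set.mem_iUnion, kDistance]
  constructor
  · rintro ⟨-, h2⟩
    rw [Real.sqrt_le_iff] at h2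
    obtain ⟨S, hSmem, hfle⟩ := Finset.exists_mem_eq_inf'
      (s := Finset.univ.powersetCard k)
      (Finset.powersetCard_nonempty.2 (by simpa using hkN))
      (fun S => (k : ℝ)⁻¹ * ∑ i ∈ S, dist p (x i) ^ 2)
    have hcard : S.card = k := (Finset.mem_powersetCard.1 hSmem).2
    have hle : (k : ℝ)⁻¹ * ∑ i ∈ S, dist p (x i) ^ 2 ≤ t ^ 2 := by
      rw [← hfle]; exact h2.2
    rw [kDistance_key_lemma x hk S hcard p] at hle
    have hw : dist p (kBary x k S) ^ 2 ≤ t ^ 2 + kWeight x k S := by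
      rw [kWeight]; linarith
    have h0 : 0 ≤ t ^ 2 + kWeight x k S := le_trans (sq_nonneg _) hw
    exact ⟨S, hSmem, by
      rw [if_pos h0]
      exact Metric.mem_closedBall.2 ((Real.le_sqrt dist_nonneg h0).2 hw)⟩
  · rintro ⟨S, hSmem, hp⟩
    by_cases h0 : 0 ≤ t ^ 2 + kWeight x k S
    · rw [if_pos h0] at hp
      have hd : dist p (kBary x k S) ^ 2 ≤ t ^ 2 + kWeight x k S :=
        (Real.le_sqrt dist_nonneg h0).1 (Metric.mem_closedBall.1 hp)
      have hcard : S.card = k := (Finset.mem_powersetCard.1 hSmem).2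
      refine ⟨Real.sqrt_nonneg _, Real.sqrt_le_iff.2 ⟨ht, ?_⟩⟩
      refine le_trans (Finset.inf'_le _ hSmem) ?_
      rw [kDistance_key_lemma x hk S hcard p, kWeight] at *
      linarith
    · rw [if_neg h0] at hp
      exact absurd hp (Set.notMem_empty p)
end
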